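/- Let γ ≥ 0 and σ ≥ 0 be constants, and let (x, y) be a solution on an interval I of the SIR system x'(t) = -γ σ x(t) y(t), y'(t) = γ σ x(t) y(t) - γ y(t). Then the quantity ρ(t) = x(t) · exp(-σ (x(t) + y(t))) is constant on I. -/

import Mathlib

open Set

/-- For the SIR system with constant reproduction number `σ ≥ 0` and recovery rate
`γ ≥ 0`, the quantity `ρ(t) = x(t) · exp (-σ (x(t) + y(t)))` is constant on the
interval `I`. -/
theorem sir_rho_constant
    (γ σ : ℝ) (hγ : 0 ≤ γ) (hσ : 0 ≤ σ)
    (I : Set ℝ) (hI : Convex ℝ I)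
    (x y : ℝ → ℝ)
    (hx : ∀ t ∈ I, HasDerivWithinAt x (-γ * σ * x t * y t) I t)
    (hy : ∀ t ∈ I, HasDerivWithinAt y (γ * σ * x t * y t - γ * y t) I t) :
    ∀ s ∈ I, ∀ t ∈ I,
      x s * Real.exp (-σ * (x s + y s)) = x t * Real.exp (-σ * (x t + y t)) := by
  intro s hs t ht
  set f : ℝ → ℝ := fun t => x t * Real.exp (-σ * (x t + y t)) with hf
  have hderiv : ∀ u ∈ I, HasDerivWithinAt f 0 I u := by
    intro u hu
    have h1 := hx u hu
    have h2 := hy u hu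
    have hsum : HasDerivWithinAt (fun t => -σ * (x t + y t))
        (-σ * ((-γ * σ * x u * y u) + (γ * σ * x u * y u - γ * y u))) I u :=
      ((h1.add h2).const_mul (-σ))
    have hexp := hsum.exp
    have := h1.fun_mul hexp
    refine this.congr_deriv ?_
    ring
  have bound : ∀ u ∈ I, ‖(0 : ℝ)‖ ≤ 0 := fun u hu => by simp
  have := hI.norm_image_sub_le_of_norm_hasDerivWithin_le hderiv bound ht hs
  simp only [zero_mul, norm_le_zero_iff, sub_eq_zero] at this
  exact this
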